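/- An ideal I of the localized polynomial ring S_f is a monomial ideal if and only if there exists a monomial ideal I' of S such that I = I'·S_f. Moreover, I' can be chosen so that every minimal monomial generator u of I' satisfies supp(u) ⊆ {1,…,n}∖A, and the monomial ideal I' with this extra property is uniquely determined, namely I' = I ∩ S. -/

import Mathlib

open MvPolynomial

noncomputable section

variable {K : Type} [Field K] {n : ℕ}

/-- `y` is a monomial of the localization `S_f`, i.e. `y = x^a / f^k`
for some `a : ℕⁿ` and `k : ℕ`. -/
def IsMonomialLoc (f : MvPolynomial (Fin n) K) (y : Localization.Away f) : Prop :=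
  ∃ (a : Fin n →₀ ℕ) (k : ℕ),
    y * algebraMap (MvPolynomial (Fin n) K) (Localization.Away f) (f ^ k) =
      algebraMap (MvPolynomial (Fin n) K) (Localization.Away f) (monomial a 1)

/-- `I` is a monomial ideal of `S_f`: it is generated by monomials. -/
def IsMonomialIdealLoc (f : MvPolynomial (Fin n) K)
    (I : Ideal (Localization.Away f)) : Prop :=
  ∃ G : Set (Localization.Away f), (∀ y ∈ G, IsMonomialLoc f y) ∧ I = Ideal.span G

/-- `I'` is a monomial ideal of `S = K[x_1, …, x_n]`. -/
def IsMonomialIdealPoly (I' : Ideal (MvPolynomial (Fin n) K)) : Prop :=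
  ∃ G : Set (MvPolynomial (Fin n) K),
    (∀ g ∈ G, ∃ a : Fin n →₀ ℕ, g = monomial a 1) ∧ I' = Ideal.span G

/-- `I'` is a monomial ideal of `S` generated by monomials `u` with `supp u ⊆ [n] ∖ A`;
equivalently (by minimality of `G(I')` inside any monomial generating set), every
minimal monomial generator `u` of `I'` satisfies `supp u ⊆ [n] ∖ A`. -/
def IsMonomialIdealOff (A : Finset (Fin n)) (I' : Ideal (MvPolynomial (Fin n) K)) : Prop :=
  ∃ G : Set (MvPolynomial (Fin n) K),
    (∀ g ∈ G, ∃ a : Fin n →₀ ℕ, (∀ j ∈ A, a j = 0) ∧ g = monomial a 1) ∧ I' = Ideal.span G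


lemma prod_X_eq_monomial (s : Finset (Fin n)) :
    (∏ j ∈ s, (X j : MvPolynomial (Fin n) K)) = monomial (∑ j ∈ s, Finsupp.single j 1) 1 := by
  classical
  induction s using Finset.induction with
  | empty => simp
  | @insert a s h ih =>
      rw [Finset.prod_insert h, Finset.sum_insert h, ih, X, monomial_mul, one_mul]

variable {A : Finset (Fin n)} {f : MvPolynomial (Fin n) K}

lemma isUnit_image_monomial (hf : f = ∏ j ∈ A, X j) (a : Fin n →₀ ℕ)
    (ha : ∀ j ∉ A, a j = 0) :
    IsUnit (algebraMap (MvPolynomial (Fin n) K) (Localization.Away f) (monomial a 1)) := by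
  classical
  classical
  set k : ℕ := ∑ j, a j with hk
  set d : Fin n →₀ ℕ := ∑ j ∈ A, Finsupp.single j 1 with hd
  have hdj : ∀ j, d j = if j ∈ A then 1 else 0 := by
    intro j
    rw [hd, Finsupp.finset_sum_apply]
    by_cases h : j ∈ A
    · rw [if_pos h, Finset.sum_eq_single j]
      · simp
      · intro b _ hb; simp [Finsupp.single_apply, hb]
      · intro hj; exact absurd h hj
    · rw [if_neg h, Finset.sum_eq_zero]
      intro b hb
      have : b ≠ j := fun e => h (e ▸ hb)
      simp [Finsupp.single_apply, this]
  have hle : a ≤ k • d := by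
    intro j
    by_cases h : j ∈ A
    · have : (k • d) j = k * d j := by simp
      rw [this, hdj, if_pos h, mul_one]
      exact Finset.single_le_sum (f := fun j => a j) (fun _ _ => Nat.zero_le _)
        (Finset.mem_univ j)
    · rw [ha j h]; exact Nat.zero_le _
  have hdvd : monomial a (1:K) ∣ f ^ k := by
    refine ⟨monomial (k • d - a) 1, ?_⟩
    rw [hf, prod_X_eq_monomial, ← hd, monomial_pow, one_pow, monomial_mul, one_mul]
    rw [add_tsub_cancel_of_le hle]
  have hu : IsUnit (algebraMap (MvPolynomial (Fin n) K) (Localization.Away f) (f ^ k)) := by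
    rw [map_pow]
    exact (IsLocalization.Away.algebraMap_isUnit (S := Localization.Away f) f).pow k
  exact isUnit_of_dvd_unit (map_dvd _ hdvd) hu

lemma f_ne_zero (hf : f = ∏ j ∈ A, X j) : f ≠ 0 := by
  rw [hf]
  exact Finset.prod_ne_zero_iff.mpr fun j _ => X_ne_zero j

lemma algMap_injective (hf : f = ∏ j ∈ A, X j) :
    Function.Injective (algebraMap (MvPolynomial (Fin n) K) (Localization.Away f)) :=
  IsLocalization.injective _ (powers_le_nonZeroDivisors_of_noZeroDivisors (f_ne_zero hf))

lemma comap_map_le (hf : f = ∏ j ∈ A, X j) {I' : Ideal (MvPolynomial (Fin n) K)}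
    (h : IsMonomialIdealOff A I') :
    Ideal.comap (algebraMap (MvPolynomial (Fin n) K) (Localization.Away f))
      (Ideal.map (algebraMap (MvPolynomial (Fin n) K) (Localization.Away f)) I') ≤ I' := by
  classical
  obtain ⟨G, hG, rfl⟩ := h
  set T : Set (Fin n →₀ ℕ) := {a | (∀ j ∈ A, a j = 0) ∧ monomial a (1:K) ∈ G} with hT
  have hGT : G = (fun a => monomial a (1:K)) '' T := by
    ext g
    constructor
    · intro hg
      obtain ⟨a, ha1, rfl⟩ := hG g hg
      exact ⟨a, ⟨ha1, hg⟩, rfl⟩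
    · rintro ⟨a, ⟨-, hmem⟩, rfl⟩
      exact hmem
  intro p hp
  rw [Ideal.mem_comap] at hp
  obtain ⟨⟨⟨q, hq⟩, ⟨m, k, rfl⟩⟩, hx⟩ :=
    (IsLocalization.mem_map_algebraMap_iff (Submonoid.powers f) (Localization.Away f)).mp hp
  simp only [← map_mul] at hx
  have hpq : p * f ^ k = q := algMap_injective hf hx
  have hqmem : p * f ^ k ∈ Ideal.span G := hpq ▸ hq
  rw [hGT] at hqmem ⊢
  rw [mem_ideal_span_monomial_image] at hqmem ⊢
  intro xi hxi
  set d : Fin n →₀ ℕ := ∑ j ∈ A, Finsupp.single j 1 with hd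
  have hdj : ∀ j, d j = if j ∈ A then 1 else 0 := by
    intro j
    rw [hd, Finsupp.finset_sum_apply]
    by_cases h : j ∈ A
    · rw [if_pos h, Finset.sum_eq_single j]
      · simp
      · intro b _ hb; simp [Finsupp.single_apply, hb]
      · intro hj; exact absurd h hj
    · rw [if_neg h, Finset.sum_eq_zero]
      intro b hb
      have : b ≠ j := fun e => h (e ▸ hb)
      simp [Finsupp.single_apply, this]
  have hfk : f ^ k = monomial (k • d) 1 := by
    rw [hf, prod_X_eq_monomial, ← hd, monomial_pow, one_pow]
  have hsupp : xi + k • d ∈ (p * f ^ k).support := by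
    rw [hfk, mem_support_iff, coeff_mul_monomial, mul_one]
    exact mem_support_iff.mp hxi
  obtain ⟨a, haT, hle⟩ := hqmem _ hsupp
  refine ⟨a, haT, fun j => ?_⟩
  by_cases h : j ∈ A
  · rw [haT.1 j h]; exact Nat.zero_le _
  · have := hle j
    have hdz : (k • d) j = 0 := by
      have : (k • d) j = k * d j := by simp
      rw [this, hdj, if_neg h, mul_zero]
    simpa [Finsupp.add_apply, hdz] using this

lemma span_off_map (hf : f = ∏ j ∈ A, X j) (I : Ideal (Localization.Away f))
    (hI : IsMonomialIdealLoc f I) :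
    I = Ideal.map (algebraMap (MvPolynomial (Fin n) K) (Localization.Away f))
      (Ideal.span ((fun a => monomial a (1:K)) ''
        {a : Fin n →₀ ℕ | (∀ j ∈ A, a j = 0) ∧
          algebraMap (MvPolynomial (Fin n) K) (Localization.Away f) (monomial a 1) ∈ I})) := by
  classical
  set φ := algebraMap (MvPolynomial (Fin n) K) (Localization.Away f) with hφ
  set T : Set (Fin n →₀ ℕ) := {a : Fin n →₀ ℕ | (∀ j ∈ A, a j = 0) ∧ φ (monomial a 1) ∈ I}
  apply le_antisymm
  · obtain ⟨G, hG, hspan⟩ := hI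
    conv_lhs => rw [hspan]
    rw [Ideal.span_le]
    intro y hy
    have hyI : y ∈ I := hspan ▸ Ideal.subset_span hy
    obtain ⟨a, k, hak⟩ := hG y hy
    set aA := a.filter (· ∈ A) with haA
    set aB := a.filter (fun j => ¬ j ∈ A) with haB
    have hsum : aA + aB = a := Finsupp.filter_pos_add_filter_neg a _
    have hmono : monomial a (1:K) = monomial aA 1 * monomial aB 1 := by
      rw [monomial_mul, one_mul, hsum]
    have uA : IsUnit (φ (monomial aA 1)) :=
      isUnit_image_monomial hf aA (fun j hj => Finsupp.filter_apply_neg _ _ hj)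
    have uf : IsUnit (φ (f ^ k)) := by
      rw [map_pow]
      exact (IsLocalization.Away.algebraMap_isUnit (S := Localization.Away f) f).pow k
    have hImem : φ (monomial a 1) ∈ I := hak ▸ I.mul_mem_right _ hyI
    have hBI : φ (monomial aB 1) ∈ I := by
      have h1 : φ (monomial a 1) = φ (monomial aA 1) * φ (monomial aB 1) := by
        rw [← map_mul, ← hmono]
      have h2 := I.mul_mem_left (↑uA.unit⁻¹) hImem
      rwa [h1, ← mul_assoc, IsUnit.val_inv_mul, one_mul] at h2
    have hBT : aB ∈ T := by
      refine ⟨fun j hj => Finsupp.filter_apply_neg _ _ (fun h => h hj), hBI⟩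
    set J := Ideal.map φ (Ideal.span ((fun a => monomial a (1:K)) '' T)) with hJ
    have hBJ : φ (monomial aB 1) ∈ J :=
      Ideal.mem_map_of_mem _ (Ideal.subset_span ⟨aB, hBT, rfl⟩)
    have hy2 : y * φ (f ^ k) ∈ J := by
      rw [hak]
      have : φ (monomial a 1) = φ (monomial aA 1) * φ (monomial aB 1) := by
        rw [← map_mul, ← hmono]
      rw [this]
      exact J.mul_mem_left _ hBJ
    have hyeq : y = ↑uf.unit⁻¹ * (y * φ (f ^ k)) := by
      rw [mul_comm y, ← mul_assoc, IsUnit.val_inv_mul, one_mul]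
    rw [hyeq]
    exact J.mul_mem_left _ hy2
  · rw [Ideal.map_le_iff_le_comap, Ideal.span_le]
    rintro g ⟨a, ⟨-, haI⟩, rfl⟩
    exact haI

/-- An ideal `I ⊆ S_f` is a monomial ideal iff `I = I'·S_f` for some monomial ideal
`I' ⊆ S`; moreover `I'` can be chosen with all (minimal) monomial generators supported
off `A`, and the monomial ideal `I'` with this extra property is uniquely determined,
namely `I' = I ∩ S`. -/
theorem monomial_ideal_localization_characterization
    (A : Finset (Fin n)) (f : MvPolynomial (Fin n) K) (hf : f = ∏ j ∈ A, X j)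
    (I : Ideal (Localization.Away f)) :
    (IsMonomialIdealLoc f I ↔
      ∃ I' : Ideal (MvPolynomial (Fin n) K), IsMonomialIdealPoly I' ∧
        I = Ideal.map (algebraMap (MvPolynomial (Fin n) K) (Localization.Away f)) I') ∧
    (IsMonomialIdealLoc f I →
      ∃! I' : Ideal (MvPolynomial (Fin n) K), IsMonomialIdealOff A I' ∧
        I = Ideal.map (algebraMap (MvPolynomial (Fin n) K) (Localization.Away f)) I') ∧
    (IsMonomialIdealLoc f I →
      ∀ I' : Ideal (MvPolynomial (Fin n) K), IsMonomialIdealOff A I' →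
        I = Ideal.map (algebraMap (MvPolynomial (Fin n) K) (Localization.Away f)) I' →
        I' = Ideal.comap (algebraMap (MvPolynomial (Fin n) K) (Localization.Away f)) I) := by
  classical
  set φ := algebraMap (MvPolynomial (Fin n) K) (Localization.Away f) with hφ
  set T : Set (Fin n →₀ ℕ) := {a : Fin n →₀ ℕ | (∀ j ∈ A, a j = 0) ∧
    φ (monomial a 1) ∈ I} with hT
  set I₀ : Ideal (MvPolynomial (Fin n) K) :=
    Ideal.span ((fun a => monomial a (1:K)) '' T) with hI₀
  have hI₀off : IsMonomialIdealOff A I₀ := by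
    refine ⟨(fun a => monomial a (1:K)) '' T, ?_, rfl⟩
    rintro g ⟨a, haT, rfl⟩
    exact ⟨a, haT.1, rfl⟩
  have key3 : IsMonomialIdealLoc f I →
      ∀ I' : Ideal (MvPolynomial (Fin n) K), IsMonomialIdealOff A I' →
        I = Ideal.map φ I' → I' = Ideal.comap φ I := by
    intro _ I' hoff hmap
    apply le_antisymm
    · rw [hmap]; exact Ideal.le_comap_map
    · rw [hmap]; exact comap_map_le hf hoff
  refine ⟨⟨fun hI => ⟨I₀, ?_, span_off_map hf I hI⟩, ?_⟩, fun hI => ?_, key3⟩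
  · refine ⟨(fun a => monomial a (1:K)) '' T, ?_, rfl⟩
    rintro g ⟨a, -, rfl⟩
    exact ⟨a, rfl⟩
  · rintro ⟨I', ⟨G, hG, rfl⟩, hmap⟩
    refine ⟨φ '' G, ?_, by rw [hmap, Ideal.map_span]⟩
    rintro y ⟨g, hg, rfl⟩
    obtain ⟨a, rfl⟩ := hG g hg
    exact ⟨a, 0, by simp [hφ]⟩
  · refine ⟨I₀, ⟨hI₀off, span_off_map hf I hI⟩, ?_⟩
    rintro J ⟨hJoff, hJmap⟩
    rw [key3 hI J hJoff hJmap, ← key3 hI I₀ hI₀off (span_off_map hf I hI)]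

end
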